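/- Let |ψ_hist⟩ = (T+1)^{−1/2} Σ_{t=0}^T |ψ_t⟩ ⊗ |1^t 0^{T−t}⟩, where |ψ_t⟩ = U_t ⋯ U_1 |φ, 0^{n₂}⟩ for unitaries U_1,…,U_T on n qubits, and suppose U_j = I for some j ∈ [T]. Let S = {i, n+j} for a qubit index i ∈ [n], and let ρ = Tr_{\overline{S}}(|ψ_hist⟩⟨ψ_hist|). Define L_± = I ⊗ ⟨±| (acting on the clock qubit) and f_ex(A) = ((T+1)/2)(L_+ A L_+† − L_− A L_−†). Then f_ex(ρ) = Tr_{\overline{i}}(|ψ_j⟩⟨ψ_j|), and moreover ‖f_ex(A)‖₁ ≤ (T+1)‖A‖₁ for every operator A on ℂ² ⊗ ℂ². -/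

import Mathlib

open Matrix BigOperators
open scoped ComplexOrder

/-- The trace norm `‖A‖₁ = Tr √(Aᴴ A)` of a complex matrix. -/
noncomputable def traceNorm {m : Type*} [Fintype m] [DecidableEq m]
    (A : Matrix m m ℂ) : ℝ :=
  (((Matrix.posSemidef_conjTranspose_mul_self A).1.eigenvectorUnitary : Matrix m m ℂ) *
      diagonal (((↑) : ℝ → ℂ) ∘ (√·) ∘ (Matrix.posSemidef_conjTranspose_mul_self A).1.eigenvalues) *
      (star (Matrix.posSemidef_conjTranspose_mul_self A).1.eigenvectorUnitary : Matrix m m ℂ)).trace.re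

/-- `L₊ A L₊†` for `L₊ = I ⊗ ⟨+|` acting on a two-qubit operator. -/
noncomputable def Lplus (A : Matrix (Fin 2 × Fin 2) (Fin 2 × Fin 2) ℂ) :
    Matrix (Fin 2) (Fin 2) ℂ :=
  Matrix.of fun p q => (1/2 : ℂ) * ∑ s : Fin 2, ∑ t : Fin 2, A (p, s) (q, t)

/-- `L₋ A L₋†` for `L₋ = I ⊗ ⟨−|` acting on a two-qubit operator. -/
noncomputable def Lminus (A : Matrix (Fin 2 × Fin 2) (Fin 2 × Fin 2) ℂ) :
    Matrix (Fin 2) (Fin 2) ℂ :=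
  Matrix.of fun p q =>
    (1/2 : ℂ) * ∑ s : Fin 2, ∑ t : Fin 2, (-1 : ℂ) ^ ((s : ℕ) + (t : ℕ)) * A (p, s) (q, t)

/-- The extraction map `f_ex(A) = ((T+1)/2)(L₊ A L₊† − L₋ A L₋†)`. -/
noncomputable def fex (T : ℕ) (A : Matrix (Fin 2 × Fin 2) (Fin 2 × Fin 2) ℂ) :
    Matrix (Fin 2) (Fin 2) ℂ :=
  (((T : ℂ) + 1) / 2) • (Lplus A - Lminus A)

/-- The unary clock string `|t̂⟩ = |1^t 0^{T−t}⟩`. -/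
def clockString (T : ℕ) (t : Fin (T + 1)) : Fin T → Fin 2 :=
  fun k => if (k : ℕ) < (t : ℕ) then 1 else 0

/-- The single-qubit reduced density matrix of a pure state `φ` on qubit `i`. -/
noncomputable def rdm1 {m : ℕ} (φ : (Fin m → Fin 2) → ℂ) (i : Fin m) :
    Matrix (Fin 2) (Fin 2) ℂ :=
  Matrix.of fun p q => ∑ z : Fin m → Fin 2,
    if z i = p then φ z * star (φ (Function.update z i q)) else 0

/-- The reduced density matrix of a pure state on system ⊗ clock registers, keeping
system qubit `i` and clock qubit `j`. -/
noncomputable def rdmSC {n T : ℕ}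
    (φ : ((Fin n → Fin 2) × (Fin T → Fin 2)) → ℂ) (i : Fin n) (j : Fin T) :
    Matrix (Fin 2 × Fin 2) (Fin 2 × Fin 2) ℂ :=
  Matrix.of fun p q => ∑ x : Fin n → Fin 2, ∑ c : Fin T → Fin 2,
    if x i = p.1 ∧ c j = p.2 then
      φ (x, c) * star (φ (Function.update x i q.1, Function.update c j q.2)) else 0

section clock
variable {T : ℕ}

private lemma clockString_inj {t t' : Fin (T + 1)}
    (h : clockString T t = clockString T t') : t = t' := by
  apply Fin.ext
  by_contra hne
  rcases Nat.lt_or_ge (t : ℕ) (t' : ℕ) with hlt | hge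
  · have hk : (t : ℕ) < T := by have := t'.isLt; omega
    have := congrFun h ⟨t, hk⟩
    simp only [clockString, lt_irrefl, if_neg (lt_irrefl _), if_pos hlt] at this
    exact absurd this (by decide)
  · have hlt : (t' : ℕ) < (t : ℕ) := by omega
    have hk : (t' : ℕ) < T := by have := t.isLt; omega
    have := congrFun h ⟨t', hk⟩
    simp only [clockString, if_pos hlt, if_neg (lt_irrefl _)] at this
    exact absurd this (by decide)

variable (j : Fin T)

private lemma clock_castSucc_j : clockString T j.castSucc j = 0 := by
  simp [clockString]

private lemma clock_succ_j : clockString T j.succ j = 1 := by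
  simp [clockString]

private lemma update_clock_castSucc :
    Function.update (clockString T j.castSucc) j 1 = clockString T j.succ := by
  funext k
  rcases eq_or_ne k j with rfl | hk
  · simp [clockString]
  · rw [Function.update_of_ne hk]
    have hv : (k : ℕ) ≠ (j : ℕ) := fun h => hk (Fin.ext h)
    simp only [clockString, Fin.coe_castSucc, Fin.val_succ]
    split_ifs with h1 h2 h2 <;> first | rfl | omega

private lemma update_clock_succ :
    Function.update (clockString T j.succ) j 0 = clockString T j.castSucc := by
  funext k
  rcases eq_or_ne k j with rfl | hk
  · simp [clockString]
  · rw [Function.update_of_ne hk]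
    have hv : (k : ℕ) ≠ (j : ℕ) := fun h => hk (Fin.ext h)
    simp only [clockString, Fin.coe_castSucc, Fin.val_succ]
    split_ifs with h1 h2 h2 <;> first | rfl | omega

private lemma upd1_unique {t t' : Fin (T + 1)} (h0 : clockString T t j = 0)
    (h : Function.update (clockString T t) j 1 = clockString T t') :
    t = j.castSucc := by
  have htj : ¬ (j : ℕ) < (t : ℕ) := by
    intro hl
    simp only [clockString, if_pos hl] at h0
    exact absurd h0 (by decide)
  have hjt' : (j : ℕ) < (t' : ℕ) := by
    have h1 := congrFun h j
    rw [Function.update_self] at h1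
    by_contra hn
    simp only [clockString, if_neg hn] at h1
    exact absurd h1 (by decide)
  have ht : (t : ℕ) = (j : ℕ) := by
    by_contra hn
    have hlt : (t : ℕ) < (j : ℕ) := by omega
    have hkT : (t : ℕ) < T := lt_trans hlt j.isLt
    have h1 := congrFun h ⟨t, hkT⟩
    rw [Function.update_of_ne (by intro he; exact absurd (congrArg Fin.val he) (by simpa using hn))] at h1
    have hlt' : (t : ℕ) < (t' : ℕ) := by omega
    simp only [clockString, if_neg (lt_irrefl _), if_pos hlt'] at h1
    exact absurd h1 (by decide)
  exact Fin.ext (by simpa using ht)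

private lemma upd1_unique' {t t' : Fin (T + 1)} (h0 : clockString T t j = 0)
    (h : Function.update (clockString T t) j 1 = clockString T t') :
    t' = j.succ := by
  have ht := upd1_unique j h0 h
  subst ht
  rw [update_clock_castSucc] at h
  exact (clockString_inj h).symm

private lemma upd0_unique {t t' : Fin (T + 1)} (h0 : clockString T t j = 1)
    (h : Function.update (clockString T t) j 0 = clockString T t') :
    t = j.succ := by
  have htj : (j : ℕ) < (t : ℕ) := by
    by_contra hn
    simp only [clockString, if_neg hn] at h0
    exact absurd h0 (by decide)
  have hjt' : ¬ (j : ℕ) < (t' : ℕ) := by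
    have h1 := congrFun h j
    rw [Function.update_self] at h1
    intro hl
    simp only [clockString, if_pos hl] at h1
    exact absurd h1 (by decide)
  have ht : (t : ℕ) = (j : ℕ) + 1 := by
    by_contra hn
    have hge : (j : ℕ) + 1 < (t : ℕ) := by omega
    have hkT : (j : ℕ) + 1 < T := by have := t.isLt; omega
    have h1 := congrFun h ⟨(j : ℕ) + 1, hkT⟩
    rw [Function.update_of_ne (by intro he; exact absurd (congrArg Fin.val he) (by simp))] at h1
    have hlt' : ¬ ((j : ℕ) + 1 < (t' : ℕ)) := by omega
    simp only [clockString, if_pos hge, if_neg hlt'] at h1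
    exact absurd h1 (by decide)
  exact Fin.ext (by simpa using ht)

private lemma upd0_unique' {t t' : Fin (T + 1)} (h0 : clockString T t j = 1)
    (h : Function.update (clockString T t) j 0 = clockString T t') :
    t' = j.castSucc := by
  have ht := upd0_unique j h0 h
  subst ht
  rw [update_clock_succ] at h
  exact (clockString_inj h).symm

end clock

private lemma inner_sum_eval {n T : ℕ} (ψ : Fin (T+1) → (Fin n → Fin 2) → ℂ)
    (ψhist : ((Fin n → Fin 2) × (Fin T → Fin 2)) → ℂ) (r : ℝ)
    (hclock : ∀ x t, ψhist (x, clockString T t) = (r:ℂ) * ψ t x)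
    (hnon : ∀ x c, (∀ t, c ≠ clockString T t) → ψhist (x, c) = 0)
    (j : Fin T) (x x' : Fin n → Fin 2) (s s' : Fin 2) (ta tb : Fin (T+1))
    (hs : clockString T ta j = s)
    (hupd : Function.update (clockString T ta) j s' = clockString T tb)
    (huniq : ∀ t t' : Fin (T+1), clockString T t j = s →
        Function.update (clockString T t) j s' = clockString T t' → t = ta) :
    ∑ c : Fin T → Fin 2,
      (if c j = s then ψhist (x, c) * star (ψhist (x', Function.update c j s')) else 0)
      = (r:ℂ)^2 * (ψ ta x * star (ψ tb x')) := by
  rw [Finset.sum_eq_single (clockString T ta)]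
  · rw [if_pos hs, hclock, hupd, hclock]
    simp only [star_mul', Complex.star_def, Complex.conj_ofReal]
    ring
  · intro c _ hne
    by_cases hcj : c j = s
    · rw [if_pos hcj]
      by_cases hclk : ∃ t, c = clockString T t
      · obtain ⟨t, rfl⟩ := hclk
        have hz : ∀ t', Function.update (clockString T t) j s' ≠ clockString T t' := by
          intro t' hE
          exact hne (by rw [huniq t t' hcj hE])
        rw [hnon _ _ hz, star_zero, mul_zero]
      · push_neg at hclk
        rw [hnon _ _ hclk, zero_mul]
    · exact if_neg hcj
  · intro h; exact absurd (Finset.mem_univ _) h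

noncomputable def frobSq {m : Type*} [Fintype m] [DecidableEq m]
    (A : Matrix m m ℂ) : ℝ := ∑ i, ∑ j, ‖A i j‖ ^ 2

section tn
variable {m : Type*} [Fintype m] [DecidableEq m]

private lemma star_mul_self_eigU {S : Matrix m m ℂ} (hS : S.IsHermitian) :
    (star (hS.eigenvectorUnitary : Matrix m m ℂ)) * (hS.eigenvectorUnitary : Matrix m m ℂ) = 1 :=
  (Matrix.mem_unitaryGroup_iff').mp (hS.eigenvectorUnitary).2

private lemma trace_eq_sum_eigs {S : Matrix m m ℂ} (hS : S.IsHermitian) :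
    S.trace = ∑ i, ((hS.eigenvalues i : ℝ) : ℂ) := by
  conv_lhs => rw [hS.spectral_theorem]
  rw [Unitary.conjStarAlgAut_apply, Matrix.trace_mul_cycle, star_mul_self_eigU hS, Matrix.one_mul, Matrix.trace_diagonal]
  rfl

private lemma trace_sq_eq_sum_eigs {S : Matrix m m ℂ} (hS : S.IsHermitian) :
    (S * S).trace = ∑ i, ((hS.eigenvalues i : ℝ) : ℂ) ^ 2 := by
  set U : Matrix m m ℂ := (hS.eigenvectorUnitary : Matrix m m ℂ)
  set D : Matrix m m ℂ := Matrix.diagonal ((↑) ∘ hS.eigenvalues)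
  have h : S * S = U * (D * D) * star U := by
    conv_lhs => rw [hS.spectral_theorem]
    show (U * D * star U) * (U * D * star U) = _
    calc (U * D * star U) * (U * D * star U)
        = U * D * ((star U * U) * (D * star U)) := by
          simp only [Matrix.mul_assoc]
      _ = U * (D * D) * star U := by
          rw [star_mul_self_eigU hS, Matrix.one_mul]; simp only [Matrix.mul_assoc]
  rw [h, Matrix.trace_mul_cycle, star_mul_self_eigU hS, Matrix.one_mul,
    Matrix.diagonal_mul_diagonal, Matrix.trace_diagonal]
  simp [pow_two]

private noncomputable def tnEigs (A : Matrix m m ℂ) : m → ℝ :=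
  fun i => √((Matrix.posSemidef_conjTranspose_mul_self A).1.eigenvalues i)

private lemma tnEigs_nonneg (A : Matrix m m ℂ) (i : m) : 0 ≤ tnEigs A i :=
  Real.sqrt_nonneg _

private lemma traceNorm_eq_sum (A : Matrix m m ℂ) : traceNorm A = ∑ i, tnEigs A i := by
  unfold traceNorm tnEigs
  rw [Matrix.trace_mul_cycle, star_mul_self_eigU, Matrix.one_mul, Matrix.trace_diagonal]
  simp

private lemma frobSq_eq_sum (A : Matrix m m ℂ) : frobSq A = ∑ i, tnEigs A i ^ 2 := by
  have h4 : (Aᴴ * A).trace = ∑ i, ((tnEigs A i : ℝ) : ℂ) ^ 2 := by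
    rw [trace_eq_sum_eigs (Matrix.posSemidef_conjTranspose_mul_self A).1]
    refine Finset.sum_congr rfl fun i _ => ?_
    unfold tnEigs
    rw [← Complex.ofReal_pow, Real.sq_sqrt ((Matrix.posSemidef_conjTranspose_mul_self A).eigenvalues_nonneg i)]
  have h5 : (Aᴴ * A).trace = ((frobSq A : ℝ) : ℂ) := by
    rw [Matrix.trace]
    unfold frobSq
    push_cast
    rw [Finset.sum_comm]
    refine Finset.sum_congr rfl fun i _ => ?_
    simp only [Matrix.diag_apply, Matrix.mul_apply, Matrix.conjTranspose_apply]
    refine Finset.sum_congr rfl fun j _ => ?_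
    rw [Complex.star_def, ← Complex.normSq_eq_conj_mul_self]
    norm_cast
    exact (Complex.sq_norm _).symm
  have h6 : ((frobSq A : ℝ):ℂ) = ((∑ i, tnEigs A i ^ 2 : ℝ) : ℂ) := by
    push_cast
    exact h5.symm.trans h4
  exact_mod_cast h6

private lemma traceNorm_nonneg (A : Matrix m m ℂ) : 0 ≤ traceNorm A := by
  rw [traceNorm_eq_sum]
  exact Finset.sum_nonneg fun i _ => tnEigs_nonneg A i

private lemma frobSq_le_sq_traceNorm (A : Matrix m m ℂ) : frobSq A ≤ traceNorm A ^ 2 := by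
  rw [frobSq_eq_sum, traceNorm_eq_sum]
  calc ∑ i, tnEigs A i ^ 2 ≤ ∑ i, tnEigs A i * ∑ k, tnEigs A k :=
        Finset.sum_le_sum fun i _ => by
          rw [pow_two]
          exact mul_le_mul_of_nonneg_left
            (Finset.single_le_sum (fun k _ => tnEigs_nonneg A k) (Finset.mem_univ i))
            (tnEigs_nonneg A i)
    _ = (∑ i, tnEigs A i) ^ 2 := by rw [← Finset.sum_mul, pow_two]

private lemma sq_traceNorm_le_two_frobSq (A : Matrix (Fin 2) (Fin 2) ℂ) :
    traceNorm A ^ 2 ≤ 2 * frobSq A := by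
  rw [frobSq_eq_sum, traceNorm_eq_sum, Fin.sum_univ_two, Fin.sum_univ_two]
  nlinarith [sq_nonneg (tnEigs A 0 - tnEigs A 1)]

end tn

private lemma fex_apply (T : ℕ) (A : Matrix (Fin 2 × Fin 2) (Fin 2 × Fin 2) ℂ) (p q : Fin 2) :
    fex T A p q = (((T : ℂ) + 1) / 2) * (A (p, 0) (q, 1) + A (p, 1) (q, 0)) := by
  simp only [fex, Matrix.smul_apply, Matrix.sub_apply, Lplus, Lminus, Matrix.of_apply,
    Fin.sum_univ_two, smul_eq_mul, Fin.val_zero, Fin.val_one]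
  ring_nf

private lemma frobSq_fex_le (T : ℕ) (A : Matrix (Fin 2 × Fin 2) (Fin 2 × Fin 2) ℂ) :
    frobSq (fex T A) ≤ ((T : ℝ) + 1) ^ 2 / 2 * frobSq A := by
  have key : ∀ p q : Fin 2, ‖A (p,0) (q,1)‖^2 + ‖A (p,1) (q,0)‖^2
      ≤ ∑ s : Fin 2, ∑ t : Fin 2, ‖A (p,s) (q,t)‖^2 := by
    intro p q
    simp only [Fin.sum_univ_two]
    nlinarith [sq_nonneg ‖A (p,0) (q,0)‖, sq_nonneg ‖A (p,1) (q,1)‖]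
  have hA : frobSq A = ∑ p : Fin 2, ∑ q : Fin 2, ∑ s : Fin 2, ∑ t : Fin 2, ‖A (p,s) (q,t)‖^2 := by
    unfold frobSq
    rw [Fintype.sum_prod_type]
    refine (Finset.sum_congr rfl fun p _ => ?_).trans
      (Finset.sum_congr rfl fun p _ => Finset.sum_comm)
    exact Finset.sum_congr rfl fun s _ => by rw [Fintype.sum_prod_type]
  have hnorm : ∀ p q : Fin 2, ‖fex T A p q‖^2
      ≤ ((T:ℝ)+1)^2/2 * (‖A (p,0) (q,1)‖^2 + ‖A (p,1) (q,0)‖^2) := by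
    intro p q
    rw [fex_apply, norm_mul, mul_pow]
    have h1 : ‖(((T : ℂ) + 1) / 2)‖ = ((T:ℝ)+1)/2 := by
      rw [show ((T:ℂ)+1)/2 = ((((T:ℝ)+1)/2 : ℝ) : ℂ) by push_cast; ring,
        Complex.norm_real, Real.norm_of_nonneg (by positivity)]
    rw [h1]
    have h2 : ‖A (p,0) (q,1) + A (p,1) (q,0)‖^2
        ≤ 2*(‖A (p,0) (q,1)‖^2 + ‖A (p,1) (q,0)‖^2) := by
      have := norm_add_le (A (p,0) (q,1)) (A (p,1) (q,0))
      nlinarith [norm_nonneg (A (p,0) (q,1)), norm_nonneg (A (p,1) (q,0)),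
        sq_nonneg (‖A (p,0) (q,1)‖ - ‖A (p,1) (q,0)‖), norm_nonneg (A (p,0) (q,1) + A (p,1) (q,0))]
    nlinarith [sq_nonneg (((T:ℝ)+1)/2)]
  have : frobSq (fex T A) ≤ ∑ p : Fin 2, ∑ q : Fin 2,
      ((T:ℝ)+1)^2/2 * (‖A (p,0) (q,1)‖^2 + ‖A (p,1) (q,0)‖^2) := by
    unfold frobSq
    exact Finset.sum_le_sum fun p _ => Finset.sum_le_sum fun q _ => hnorm p q
  refine this.trans ?_
  rw [hA]
  simp only [← Finset.mul_sum]
  refine mul_le_mul_of_nonneg_left ?_ (by positivity)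
  exact Finset.sum_le_sum fun p _ => Finset.sum_le_sum fun q _ => key p q

private lemma part2 (T : ℕ) (A : Matrix (Fin 2 × Fin 2) (Fin 2 × Fin 2) ℂ) :
    traceNorm (fex T A) ≤ ((T : ℝ) + 1) * traceNorm A := by
  have c0 : (0:ℝ) ≤ (T:ℝ)+1 := by positivity
  have h := sq_traceNorm_le_two_frobSq (fex T A)
  have h2 := frobSq_fex_le T A
  have h3 := frobSq_le_sq_traceNorm A
  have hsq : traceNorm (fex T A)^2 ≤ (((T:ℝ)+1) * traceNorm A)^2 := by
    have h4 := mul_le_mul_of_nonneg_left h3 (sq_nonneg ((T:ℝ)+1))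
    nlinarith
  exact le_of_pow_le_pow_left₀ two_ne_zero (mul_nonneg c0 (traceNorm_nonneg A)) hsq

/-- **Extraction Lemma.** Let `|ψ_hist⟩ = (T+1)^{-1/2} Σ_t |ψ_t⟩|1^t0^{T−t}⟩`
with `|ψ_t⟩ = U_t ⋯ U_1 |φ, 0^{n₂}⟩`, and suppose the step `U_j = I` (for the clock qubit
with 0-based index `j`, i.e. time step `j+1`). Then `f_ex` applied to the two-qubit reduced
density matrix on system qubit `i` and clock qubit `j` recovers `Tr_{ī}(|ψ_{j+1}⟩⟨ψ_{j+1}|)`,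
and `‖f_ex(A)‖₁ ≤ (T+1)‖A‖₁` for every two-qubit operator `A`. -/
theorem extraction_lemma (n₁ n₂ T : ℕ)
    (U : Fin T → Matrix (Fin (n₁ + n₂) → Fin 2) (Fin (n₁ + n₂) → Fin 2) ℂ)
    (hU : ∀ t, U t * (U t)ᴴ = 1 ∧ (U t)ᴴ * U t = 1)
    (φ0 : (Fin n₁ → Fin 2) → ℂ) (hφ0 : ∑ z : Fin n₁ → Fin 2, ‖φ0 z‖ ^ 2 = 1)
    (ψ : Fin (T + 1) → ((Fin (n₁ + n₂) → Fin 2) → ℂ))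
    (hinit : ψ 0 = fun x =>
      if ∀ k : Fin n₂, x (Fin.natAdd n₁ k) = 0 then φ0 (fun i => x (Fin.castAdd n₂ i)) else 0)
    (hrec : ∀ t : Fin T, ψ t.succ = (U t).mulVec (ψ t.castSucc))
    (j : Fin T) (hId : U j = 1) (i : Fin (n₁ + n₂))
    (ψhist : ((Fin (n₁ + n₂) → Fin 2) × (Fin T → Fin 2)) → ℂ)
    (hhist : ψhist = fun xc =>
      (((Real.sqrt (T + 1))⁻¹ : ℝ) : ℂ) *
        ∑ t : Fin (T + 1), (if xc.2 = clockString T t then (1 : ℂ) else 0) * ψ t xc.1) :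
    fex T (rdmSC ψhist i j) = rdm1 (ψ j.succ) i ∧
    (∀ A : Matrix (Fin 2 × Fin 2) (Fin 2 × Fin 2) ℂ,
        traceNorm (fex T A) ≤ ((T : ℝ) + 1) * traceNorm A) := by
  refine ⟨?_, fun A => part2 T A⟩
  have hψeq : ψ j.castSucc = ψ j.succ := by rw [hrec j, hId, Matrix.one_mulVec]
  have hclock : ∀ x t, ψhist (x, clockString T t)
      = (((Real.sqrt (T + 1))⁻¹ : ℝ) : ℂ) * ψ t x := by
    intro x t
    rw [hhist]
    simp only
    congr 1
    rw [Finset.sum_eq_single t]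
    · rw [if_pos rfl, one_mul]
    · intro t' _ hne
      rw [if_neg (fun h => hne (clockString_inj h).symm), zero_mul]
    · intro h; exact absurd (Finset.mem_univ _) h
  have hnon : ∀ x c, (∀ t, c ≠ clockString T t) → ψhist (x, c) = 0 := by
    intro x c hc
    rw [hhist]
    simp only
    rw [Finset.sum_eq_zero (fun t _ => by rw [if_neg (hc t), zero_mul]), mul_zero]
  have hr2 : ((((Real.sqrt (T + 1))⁻¹ : ℝ) : ℂ))^2 = ((T:ℂ)+1)⁻¹ := by
    have h1 : ((Real.sqrt (T + 1))⁻¹ : ℝ)^2 = ((T:ℝ)+1)⁻¹ := by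
      rw [inv_pow, Real.sq_sqrt (by positivity)]
    rw [show ((((Real.sqrt (T + 1))⁻¹ : ℝ) : ℂ))^2
        = ((((Real.sqrt (T + 1))⁻¹ : ℝ)^2 : ℝ) : ℂ) by push_cast; ring, h1]
    push_cast
    ring
  have key : ∀ (p q s s' : Fin 2) (ta tb : Fin (T+1)),
      clockString T ta j = s →
      Function.update (clockString T ta) j s' = clockString T tb →
      (∀ t t' : Fin (T+1), clockString T t j = s →
        Function.update (clockString T t) j s' = clockString T t' → t = ta) →
      rdmSC ψhist i j (p, s) (q, s')
        = ((((Real.sqrt (T + 1))⁻¹ : ℝ) : ℂ))^2 *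
          ∑ x : Fin (n₁+n₂) → Fin 2,
            (if x i = p then ψ ta x * star (ψ tb (Function.update x i q)) else 0) := by
    intro p q s s' ta tb h1 h2 h3
    simp only [rdmSC, Matrix.of_apply]
    rw [Finset.mul_sum]
    refine Finset.sum_congr rfl fun x _ => ?_
    by_cases hx : x i = p
    · rw [if_pos hx, ← inner_sum_eval ψ ψhist _ hclock hnon j x (Function.update x i q) s s' ta tb h1 h2 h3]
      refine Finset.sum_congr rfl fun c _ => ?_
      by_cases hc : c j = s
      · rw [if_pos ⟨hx, hc⟩, if_pos hc]
      · rw [if_neg (fun hh => hc hh.2), if_neg hc]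
    · rw [if_neg hx, mul_zero]
      exact Finset.sum_eq_zero fun c _ => if_neg (fun hh => hx hh.1)
  ext p q
  rw [fex_apply]
  rw [key p q 0 1 j.castSucc j.succ (clock_castSucc_j j) (update_clock_castSucc j)
      (fun t t' h h' => upd1_unique j h h'),
    key p q 1 0 j.succ j.castSucc (clock_succ_j j) (update_clock_succ j)
      (fun t t' h h' => upd0_unique j h h')]
  simp only [hψeq, hr2]
  simp only [rdm1, Matrix.of_apply]
  have hT1 : ((T:ℂ)+1) ≠ 0 := by
    have h : (((T+1:ℕ)):ℂ) ≠ 0 := Nat.cast_ne_zero.mpr (Nat.succ_ne_zero T)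
    push_cast at h
    exact h
  field_simp
  ring
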